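/- If Δ ~ Δ', s is Byzantine, m ∈ Δ(s).pending, and b has received m strictly more times than s has (count of m in Δ'(b).received > count in Δ(s).received), then receive(Δ,m,s) ~ Δ'. -/
import Mathlib


/-- Local view of the network at one server. -/
structure NetState (Msg : Type*) where
  sent : List Msg
  received : List Msg
  pending : Multiset Msg

variable {Server Msg : Type*}

/-- `send Δ m s`: server `s` sends `m`; `m` is appended to `s`'s `sent` list and added
to the `pending` multiset of every server. -/
def send [DecidableEq Server] (Δ : Server → NetState Msg) (m : Msg) (s : Server) :
    Server → NetState Msg := fun s' =>
  if s' = s then ⟨(Δ s').sent ++ [m], (Δ s').received, (Δ s').pending + {m}⟩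
  else ⟨(Δ s').sent, (Δ s').received, (Δ s').pending + {m}⟩

/-- `receive Δ m s`: server `s` receives `m`; one copy of `m` is removed from `s`'s
`pending` multiset and `m` is appended to `s`'s `received` list. -/
def receive [DecidableEq Server] [DecidableEq Msg]
    (Δ : Server → NetState Msg) (m : Msg) (s : Server) :
    Server → NetState Msg := fun s' =>
  if s' = s then ⟨(Δ s').sent, (Δ s').received ++ [m], (Δ s').pending.erase m⟩
  else Δ s'

/-- Observational equivalence between a network `Δ` with Byzantine server set `𝔹` and a
network `Δ'` in which the single nondeterministic process `b` plays the role of all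
Byzantine servers. -/
def NetObsEq [DecidableEq Server] (𝔹 : Finset Server) (b : Server)
    (Δ Δ' : Server → NetState Msg) : Prop :=
  -- (1) they agree on all correct servers
  (∀ s, s ∉ 𝔹 → s ≠ b → Δ s = Δ' s) ∧
  -- (2) a message is sent by `b` iff it is sent by some Byzantine process
  (∑ s ∈ 𝔹, ((Δ s).sent : Multiset Msg)) = ((Δ' b).sent : Multiset Msg) ∧
  -- (3) all pending messages of `b` are pending at every Byzantine process
  (∀ s ∈ 𝔹, (Δ' b).pending ≤ (Δ s).pending) ∧
  -- (4) messages received by `b` were received by some Byzantine process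
  ((Δ' b).received : Multiset Msg) ≤ ∑ s ∈ 𝔹, ((Δ s).received : Multiset Msg) ∧
  -- (5) messages sent to a Byzantine process were also sent to `b`
  (∀ s ∈ 𝔹, ((Δ s).received : Multiset Msg) + (Δ s).pending
      = ((Δ' b).received : Multiset Msg) + (Δ' b).pending) ∧
  -- (6) messages received by a Byzantine process were received by `b`
  (∀ s ∈ 𝔹, ((Δ s).received : Multiset Msg) ≤ ((Δ' b).received : Multiset Msg))

/-- If a Byzantine server `s` receives a pending message `m` that `b` has already
received strictly more times than `s`, the resulting network is still observationally
equivalent to the unmodified `Δ'`. -/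
theorem receive_byz_already_received_netObsEq [DecidableEq Server] [DecidableEq Msg]
    (𝔹 : Finset Server) (b : Server) (Δ Δ' : Server → NetState Msg)
    (m : Msg) (s : Server) (hs : s ∈ 𝔹)
    (hm : m ∈ (Δ s).pending)
    (hcount : (Δ s).received.count m < (Δ' b).received.count m)
    (heq : NetObsEq 𝔹 b Δ Δ') :
    NetObsEq 𝔹 b (receive Δ m s) Δ' := by
  obtain ⟨h1, h2, h3, h4, h5, h6⟩ := heq
  refine ⟨?_, ?_, ?_, ?_, ?_, ?_⟩
  · intro t ht hb
    have hts : t ≠ s := fun h => ht (h ▸ hs)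
    simp only [receive, if_neg hts]
    exact h1 t ht hb
  · rw [← h2]
    apply Finset.sum_congr rfl
    intro t _
    simp only [receive]
    split <;> rfl
  · intro t ht
    by_cases hts : t = s
    · subst hts
      simp only [receive, if_pos rfl, eq_self_iff_true, if_true]
      rw [Multiset.le_iff_count]
      intro x
      have h5s := h5 t ht
      have hx := Multiset.count_le_of_le x (h3 t ht)
      by_cases hxm : x = m
      · subst hxm
        rw [Multiset.count_erase_self]
        have := congrArg (Multiset.count x) h5s
        simp only [Multiset.count_add, Multiset.coe_count] at this
        omega
      · rw [Multiset.count_erase_of_ne hxm]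
        exact hx
    · simp only [receive, if_neg hts]
      exact h3 t ht
  · refine le_trans h4 (Finset.sum_le_sum ?_)
    intro t _
    simp only [receive]
    split
    · next h =>
      subst h
      refine Multiset.le_iff_count.mpr fun x => ?_
      simp only [Multiset.coe_count, List.count_append]
      exact Nat.le_add_right _ _
    · exact le_rfl
  · intro t ht
    by_cases hts : t = s
    · subst hts
      simp only [receive, if_pos rfl, eq_self_iff_true, if_true]
      have : ((Δ t).received ++ [m] : Multiset Msg) + ((Δ t).pending.erase m)
          = ((Δ t).received : Multiset Msg) + (Δ t).pending := by
        rw [← Multiset.coe_add]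
        push_cast
        rw [add_assoc]
        congr 1
        rw [Multiset.singleton_add, Multiset.cons_erase hm]
      rw [this]
      exact h5 t ht
    · simp only [receive, if_neg hts]
      exact h5 t ht
  · intro t ht
    by_cases hts : t = s
    · subst hts
      simp only [receive, if_pos rfl, eq_self_iff_true, if_true]
      rw [Multiset.le_iff_count]
      intro x
      have hx := Multiset.count_le_of_le x (h6 t ht)
      simp only [Multiset.coe_count] at hx ⊢
      by_cases hxm : x = m
      · subst hxm
        simp only [List.count_append, List.count_singleton, List.count_nil,
          List.count_cons, add_zero, beq_iff_eq, if_pos rfl, if_true]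
        omega
      · have hmx : m ≠ x := fun h => hxm h.symm
        simp only [List.count_append, List.count_singleton, List.count_nil,
          List.count_cons, beq_iff_eq, if_neg hmx, add_zero, zero_add]
        omega
    · simp only [receive, if_neg hts]
      exact h6 t ht
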